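/- arXiv:1508.06558 — 5 statements merged into one kernel-verified Lean document; each statement's English description precedes it below -/
import Mathlib

section
/- Let s_1, ..., s_k be positive integers and for 1 ≤ t ≤ k define L_t = lcm of all products ∏_{i∈I} s_i over subsets I of {1,...,k} of size t. Then L_t divides L_{t+1} for all 1 ≤ t ≤ k-1. -/
theorem L_dvd_L_succ (k : ℕ) (s : Fin k → ℕ) (hs : ∀ i, 0 < s i)
    (t : ℕ) (h1 : 1 ≤ t) (h2 : t ≤ k - 1) :
    ((Finset.univ : Finset (Fin k)).powersetCard t).lcm (fun I => ∏ i ∈ I, s i) ∣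
      ((Finset.univ : Finset (Fin k)).powersetCard (t + 1)).lcm (fun I => ∏ i ∈ I, s i) := by
  apply Finset.lcm_dvd
  intro I hI
  rw [Finset.mem_powersetCard] at hI
  obtain ⟨hIs, hIc⟩ := hI
  have hk : t + 1 ≤ k := by omega
  obtain ⟨J, hIJ, hJs, hJc⟩ := Finset.exists_subsuperset_card_eq (n := t + 1) hIs (by omega)
    (by simpa using hk)
  exact dvd_trans (Finset.prod_dvd_prod_of_subset _ _ _ hIJ)
    (Finset.dvd_lcm (Finset.mem_powersetCard.mpr ⟨hJs, hJc⟩))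
end

section
/- Let s_1, ..., s_k be positive integers, L_t = lcm over t-element subsets I of {1,...,k} of ∏_{i∈I} s_i, and e_J = gcd(s_i : i ∈ J). Then for every 1 ≤ t ≤ k-1, L_t = lcm over (t+1)-element subsets J of {1,...,k} of (∏_{i∈J} s_i)/e_J. -/
theorem L_eq_lcm_div_gcd (k : ℕ) (s : Fin k → ℕ) (hs : ∀ i, 0 < s i)
    (t : ℕ) (h1 : 1 ≤ t) (h2 : t ≤ k - 1) :
    ((Finset.univ : Finset (Fin k)).powersetCard t).lcm (fun I => ∏ i ∈ I, s i) =
      ((Finset.univ : Finset (Fin k)).powersetCard (t + 1)).lcm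
        (fun J => (∏ i ∈ J, s i) / J.gcd s) := by
  have hk2 : 2 ≤ k := by omega
  apply Nat.dvd_antisymm
  · apply Finset.lcm_dvd
    intro I hI
    obtain ⟨hIsub, hcard⟩ := Finset.mem_powersetCard.mp hI
    have hne : ∃ j, j ∉ I := by
      by_contra h
      push_neg at h
      have : I = Finset.univ := Finset.eq_univ_of_forall h
      rw [this, Finset.card_univ, Fintype.card_fin] at hcard
      omega
    obtain ⟨j, hj⟩ := hne
    set J := insert j I with hJ
    have hJmem : J ∈ (Finset.univ : Finset (Fin k)).powersetCard (t + 1) := by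
      refine Finset.mem_powersetCard.mpr ⟨Finset.subset_univ _, ?_⟩
      rw [Finset.card_insert_of_notMem hj, hcard]
    refine dvd_trans ?_ (Finset.dvd_lcm hJmem)
    have hgj : J.gcd s ∣ s j := Finset.gcd_dvd (Finset.mem_insert_self j I)
    have hgprod : J.gcd s ∣ ∏ i ∈ J, s i :=
      hgj.trans (Finset.dvd_prod_of_mem s (Finset.mem_insert_self j I))
    rw [Nat.dvd_div_iff_mul_dvd hgprod, Finset.prod_insert hj]
    exact mul_dvd_mul hgj dvd_rfl
  · apply Finset.lcm_dvd
    intro J hJ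
    obtain ⟨hJsub, hcard⟩ := Finset.mem_powersetCard.mp hJ
    have hJne : J.Nonempty := Finset.card_pos.mp (by omega)
    have hgpos : 0 < J.gcd s := Nat.pos_of_ne_zero fun h => by
      obtain ⟨i, hi⟩ := hJne
      have hd : J.gcd s ∣ s i := Finset.gcd_dvd hi
      rw [h] at hd
      exact (hs i).ne' (Nat.eq_zero_of_zero_dvd hd)
    have hgprod : J.gcd s ∣ ∏ i ∈ J, s i := by
      obtain ⟨i, hi⟩ := hJne
      exact (Finset.gcd_dvd hi).trans (Finset.dvd_prod_of_mem s hi)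
    set L := ((Finset.univ : Finset (Fin k)).powersetCard t).lcm (fun I => ∏ i ∈ I, s i) with hL
    -- suffices ∏_J ∣ gcd * L
    have key : (∏ i ∈ J, s i) ∣ J.gcd s * L := by
      have : J.gcd s * L = J.gcd (fun i => s i * L) := by
        rw [Finset.gcd_mul_right]
        simp
      rw [this]
      apply Finset.dvd_gcd
      intro i hi
      have herase : J.erase i ∈ (Finset.univ : Finset (Fin k)).powersetCard t := by
        refine Finset.mem_powersetCard.mpr ⟨Finset.subset_univ _, ?_⟩
        rw [Finset.card_erase_of_mem hi, hcard]
        omega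
      have hdvdL : (∏ j ∈ J.erase i, s j) ∣ L := Finset.dvd_lcm herase
      calc (∏ j ∈ J, s j) = s i * ∏ j ∈ J.erase i, s j := (Finset.mul_prod_erase J s hi).symm
        _ ∣ s i * L := mul_dvd_mul_left _ hdvdL
    rw [Nat.div_dvd_iff_dvd_mul hgprod hgpos]
    exact key
end

section
/- Let s_1, ..., s_k be positive integers, and suppose t satisfies 1 ≤ t ≤ k-1 and gcd(s_i : i ∈ J) = 1 for every subset J of {1,...,k} with |J| = t+1. Then L_t = L_{t+1}, where L_t = lcm over t-element subsets I of ∏_{i∈I} s_i. -/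
open Finset

lemma lcm_pos_of_pos {α : Type*} [DecidableEq α] (S : Finset α) (f : α → ℕ) (hf : ∀ a ∈ S, 0 < f a) :
    0 < S.lcm f := by
  induction S using Finset.induction with
  | empty => simp [Finset.lcm_empty]
  | insert _ _ h ih =>
    rw [Finset.lcm_insert]
    exact Nat.lcm_pos (hf _ (mem_insert_self _ _)) (ih fun a ha => hf a (mem_insert_of_mem ha))

theorem L_eq_L_succ_of_gcd_one (k : ℕ) (s : Fin k → ℕ) (hs : ∀ i, 0 < s i)
    (t : ℕ) (h1 : 1 ≤ t) (h2 : t ≤ k - 1)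
    (hgcd : ∀ J : Finset (Fin k), J.card = t + 1 → J.gcd s = 1) :
    ((Finset.univ : Finset (Fin k)).powersetCard t).lcm (fun I => ∏ i ∈ I, s i) =
      ((Finset.univ : Finset (Fin k)).powersetCard (t + 1)).lcm (fun I => ∏ i ∈ I, s i) := by
  have hk : t + 1 ≤ k := by omega
  have hLpos : ∀ m : ℕ, 0 < ((Finset.univ : Finset (Fin k)).powersetCard m).lcm
      (fun I => ∏ i ∈ I, s i) := by
    intro m
    exact lcm_pos_of_pos _ _ (fun I _ => Finset.prod_pos (fun i _ => hs i))
  apply Nat.dvd_antisymm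
  · -- L_t ∣ L_{t+1}
    apply Finset.lcm_dvd
    intro I hI
    rw [Finset.mem_powersetCard] at hI
    obtain ⟨I', hII', hI'card⟩ := Finset.exists_superset_card_eq (by omega : I.card ≤ t + 1)
      (by simpa using hk)
    exact dvd_trans (Finset.prod_dvd_prod_of_subset I I' s hII')
      (Finset.dvd_lcm (by rw [Finset.mem_powersetCard]; exact ⟨Finset.subset_univ _, hI'card⟩))
  · -- L_{t+1} ∣ L_t
    apply Finset.lcm_dvd
    intro J hJ
    rw [Finset.mem_powersetCard] at hJ
    have hJcard := hJ.2
    have hProdpos : (0:ℕ) < ∏ i ∈ J, s i := Finset.prod_pos (fun i _ => hs i)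
    rw [← Nat.factorization_le_iff_dvd hProdpos.ne' (hLpos t).ne']
    intro p
    rcases Nat.eq_zero_or_pos p with rfl | hp0
    · simp
    by_cases hp : p.Prime
    swap
    · simp [Nat.factorization_eq_zero_of_not_prime _ hp]
    -- find i₀ ∈ J with p ∤ s i₀
    have hg := hgcd J hJcard
    have : ∃ i ∈ J, ¬ p ∣ s i := by
      by_contra h
      push_neg at h
      have : p ∣ J.gcd s := Finset.dvd_gcd h
      rw [hg] at this
      exact hp.one_lt.ne' (Nat.eq_one_of_dvd_one this ▸ rfl) |>.elim
    obtain ⟨i₀, hi₀J, hi₀⟩ := this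
    have herase : (J.erase i₀).card = t := by
      rw [Finset.card_erase_of_mem hi₀J, hJcard]; omega
    have hsplit : ∏ i ∈ J, s i = s i₀ * ∏ i ∈ J.erase i₀, s i :=
      (Finset.mul_prod_erase J s hi₀J).symm
    have hfac0 : (s i₀).factorization p = 0 :=
      Nat.factorization_eq_zero_of_not_dvd hi₀
    have hdvd : (∏ i ∈ J.erase i₀, s i) ∣
        ((Finset.univ : Finset (Fin k)).powersetCard t).lcm (fun I => ∏ i ∈ I, s i) :=
      Finset.dvd_lcm (by rw [Finset.mem_powersetCard]; exact ⟨Finset.subset_univ _, herase⟩)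
    calc ((∏ i ∈ J, s i)).factorization p
        = (s i₀).factorization p + (∏ i ∈ J.erase i₀, s i).factorization p := by
          rw [hsplit, Nat.factorization_mul (hs i₀).ne'
            (Finset.prod_pos (fun i _ => hs i)).ne']; rfl
      _ = (∏ i ∈ J.erase i₀, s i).factorization p := by rw [hfac0, zero_add]
      _ ≤ _ := (Nat.factorization_le_iff_dvd (Finset.prod_pos (fun i _ => hs i)).ne'
          (hLpos t).ne').mpr hdvd p
end

section
/- Let s_1, ..., s_k be positive integers and define d = max{|I| : I ⊆ {1,...,k}, gcd(s_i : i ∈ I) > 1} (with d = 0 if no such I exists, but assume here some s_i > 1 so d ≥ 1). If 1 ≤ t < d, then L_t < L_{t+1}, where L_t = lcm over t-element subsets I of ∏_{i∈I} s_i. -/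
lemma lcm_ne_zero_aux {α : Type*} (S : Finset α) (f : α → ℕ)
    (hf : ∀ a ∈ S, f a ≠ 0) : S.lcm f ≠ 0 := by
  classical
  induction S using Finset.induction_on with
  | empty => simp
  | @insert a S ha ih =>
    rw [Finset.lcm_insert]
    exact Nat.lcm_ne_zero (hf a (Finset.mem_insert_self a S))
      (ih fun b hb => hf b (Finset.mem_insert_of_mem hb))

lemma lcm_factorization_aux {α : Type*} (p : ℕ) (S : Finset α) (f : α → ℕ)
    (hf : ∀ a ∈ S, f a ≠ 0) :
    (S.lcm f).factorization p = S.sup fun a => (f a).factorization p := by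
  classical
  induction S using Finset.induction_on with
  | empty => simp
  | @insert a S ha ih =>
    rw [Finset.lcm_insert, Finset.sup_insert]
    have h1 : f a ≠ 0 := hf a (Finset.mem_insert_self a S)
    have h2 : S.lcm f ≠ 0 := lcm_ne_zero_aux S f fun b hb => hf b (Finset.mem_insert_of_mem hb)
    show (Nat.lcm (f a) (S.lcm f)).factorization p = _
    rw [Nat.factorization_lcm h1 h2]
    rw [Finsupp.sup_apply, ih fun b hb => hf b (Finset.mem_insert_of_mem hb)]

theorem L_lt_L_succ_of_lt_d (k : ℕ) (s : Fin k → ℕ) (hs : ∀ i, 0 < s i)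
    (hex : ∃ i, 1 < s i) (d : ℕ)
    (hd : d = (((Finset.univ : Finset (Fin k)).powerset.filter
      (fun I => 1 < I.gcd s)).sup Finset.card))
    (t : ℕ) (h1 : 1 ≤ t) (htd : t < d) :
    ((Finset.univ : Finset (Fin k)).powersetCard t).lcm (fun I => ∏ i ∈ I, s i) <
      ((Finset.univ : Finset (Fin k)).powersetCard (t + 1)).lcm (fun I => ∏ i ∈ I, s i) := by
  classical
  set F : Finset (Fin k) → ℕ := fun I => ∏ i ∈ I, s i with hF
  set Lt := ((Finset.univ : Finset (Fin k)).powersetCard t).lcm F with hLt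
  set Lt1 := ((Finset.univ : Finset (Fin k)).powersetCard (t + 1)).lcm F with hLt1
  have hF0 : ∀ I : Finset (Fin k), F I ≠ 0 := fun I =>
    (Finset.prod_pos fun i _ => hs i).ne'
  -- obtain the witness set J with |J| = d and gcd > 1
  have hne : ((Finset.univ : Finset (Fin k)).powerset.filter (fun I => 1 < I.gcd s)).Nonempty := by
    obtain ⟨i, hi⟩ := hex
    exact ⟨{i}, Finset.mem_filter.mpr ⟨Finset.mem_powerset.mpr (Finset.subset_univ _),
      by simpa using hi⟩⟩
  obtain ⟨J, hJmem, hJsup⟩ := Finset.exists_mem_eq_sup _ hne Finset.card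
  have hJcard : J.card = d := by rw [hd, hJsup]
  have hJgcd : 1 < J.gcd s := (Finset.mem_filter.mp hJmem).2
  obtain ⟨p, hp, hpdvd⟩ := Nat.exists_prime_and_dvd (by omega : J.gcd s ≠ 1)
  have hpdvds : ∀ i ∈ J, p ∣ s i := fun i hi => hpdvd.trans (Finset.gcd_dvd hi)
  have hdk : d ≤ k := by
    rw [← hJcard]
    simpa using Finset.card_le_univ J
  -- nonzero lcms
  have hLt0 : Lt ≠ 0 := lcm_ne_zero_aux _ _ fun A _ => hF0 A
  have hLt10 : Lt1 ≠ 0 := lcm_ne_zero_aux _ _ fun A _ => hF0 A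
  -- divisibility
  have hdvd : Lt ∣ Lt1 := by
    apply Finset.lcm_dvd
    intro A hA
    have hAcard : A.card = t := (Finset.mem_powersetCard.mp hA).2
    have hns : ¬ (Finset.univ : Finset (Fin k)) ⊆ A := by
      intro h
      have := Finset.card_le_card h
      simp only [Finset.card_univ, Fintype.card_fin, hAcard] at this
      omega
    obtain ⟨j, _, hjA⟩ := Finset.not_subset.mp hns
    have hmem : insert j A ∈ (Finset.univ : Finset (Fin k)).powersetCard (t + 1) :=
      Finset.mem_powersetCard.mpr ⟨Finset.subset_univ _,
        by rw [Finset.card_insert_of_notMem hjA, hAcard]⟩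
    have : F A ∣ F (insert j A) := by
      simp only [hF, Finset.prod_insert hjA]
      exact dvd_mul_left _ _
    exact this.trans (Finset.dvd_lcm hmem)
  -- valuations
  have hfacLt : Lt.factorization p
      = ((Finset.univ : Finset (Fin k)).powersetCard t).sup fun A => (F A).factorization p :=
    lcm_factorization_aux p _ _ fun A _ => hF0 A
  have hpne : ((Finset.univ : Finset (Fin k)).powersetCard t).Nonempty := by
    rw [Finset.powersetCard_nonempty]
    simp; omega
  obtain ⟨A, hA, hAsup⟩ := Finset.exists_mem_eq_sup _ hpne fun A => (F A).factorization p
  have hAcard : A.card = t := (Finset.mem_powersetCard.mp hA).2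
  have hns2 : ¬ J ⊆ A := fun h => absurd (Finset.card_le_card h) (by omega)
  obtain ⟨j, hjJ, hjA⟩ := Finset.not_subset.mp hns2
  have hBmem : insert j A ∈ (Finset.univ : Finset (Fin k)).powersetCard (t + 1) :=
    Finset.mem_powersetCard.mpr ⟨Finset.subset_univ _,
      by rw [Finset.card_insert_of_notMem hjA, hAcard]⟩
  have hsj : 0 < (s j).factorization p :=
    hp.factorization_pos_of_dvd (hs j).ne' (hpdvds j hjJ)
  have hBfac : (F (insert j A)).factorization p
      = (s j).factorization p + (F A).factorization p := by
    simp only [hF, Finset.prod_insert hjA]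
    rw [Nat.factorization_mul (hs j).ne' (hF0 A)]
    rfl
  have hBdvd : F (insert j A) ∣ Lt1 := Finset.dvd_lcm hBmem
  have hle : (F (insert j A)).factorization p ≤ Lt1.factorization p :=
    (Nat.factorization_le_iff_dvd (hF0 _) hLt10).mpr hBdvd p
  have hlt : Lt.factorization p < Lt1.factorization p := by
    rw [hfacLt, hAsup]
    omega
  exact lt_of_le_of_ne (Nat.le_of_dvd (Nat.pos_of_ne_zero hLt10) hdvd)
    (fun h => by rw [h] at hlt; omega)
end

section
/- Let s_1, ..., s_k be positive integers, at least one greater than 1, and let d = max{|I| : I ⊆ {1,...,k} nonempty, gcd(s_i : i ∈ I) > 1}. Then for 1 ≤ t ≤ k: L_t = L_k if and only if t ≥ d, where L_t = lcm over t-element subsets I of ∏_{i∈I} s_i. -/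
open Finset

lemma factorization_finset_lcm {α : Type*} [DecidableEq α] (S : Finset α) (f : α → ℕ)
    (hf : ∀ a ∈ S, f a ≠ 0) (p : ℕ) :
    (S.lcm f).factorization p = S.sup fun a => (f a).factorization p := by
  induction S using Finset.induction with
  | empty => simp
  | @insert a S ha ih =>
    have h1 : f a ≠ 0 := hf a (mem_insert_self _ _)
    have h2 : S.lcm f ≠ 0 := by
      rw [Ne, Finset.lcm_eq_zero_iff]
      rintro ⟨x, hx, hx0⟩
      exact hf x (mem_insert_of_mem hx) hx0
    rw [Finset.lcm_insert, Finset.sup_insert]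
    have hl : lcm (f a) (S.lcm f) = Nat.lcm (f a) (S.lcm f) := rfl
    rw [hl, Nat.factorization_lcm h1 h2, Finsupp.sup_apply,
      ih fun x hx => hf x (mem_insert_of_mem hx)]

theorem L_eq_L_k_iff (k : ℕ) (s : Fin k → ℕ) (hs : ∀ i, 0 < s i)
    (hex : ∃ i, 1 < s i) (d : ℕ)
    (hd : d = (((Finset.univ : Finset (Fin k)).powerset.filter
      (fun I => 1 < I.gcd s)).sup Finset.card))
    (t : ℕ) (h1 : 1 ≤ t) (h2 : t ≤ k) :
    ((Finset.univ : Finset (Fin k)).powersetCard t).lcm (fun I => ∏ i ∈ I, s i) =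
      (∏ i, s i) ↔ d ≤ t := by
  have hsne : ∀ i, s i ≠ 0 := fun i => (hs i).ne'
  set g : Finset (Fin k) → ℕ := fun I => ∏ i ∈ I, s i with hg
  set S := ((Finset.univ : Finset (Fin k)).powersetCard t) with hS
  have hSne : S.Nonempty := by
    rw [hS, Finset.powersetCard_nonempty]; simp [h2]
  have hgne : ∀ I ∈ S, g I ≠ 0 := fun I _ =>
    Finset.prod_ne_zero_iff.mpr fun i _ => hsne i
  have hPne : (∏ i, s i) ≠ 0 := Finset.prod_ne_zero_iff.mpr fun i _ => hsne i
  have hLne : S.lcm g ≠ 0 := by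
    rw [Ne, Finset.lcm_eq_zero_iff]
    rintro ⟨x, hx, hx0⟩
    exact hgne x hx hx0
  have hLdvd : S.lcm g ∣ ∏ i, s i := by
    apply Finset.lcm_dvd
    intro I hI
    exact Finset.prod_dvd_prod_of_subset I univ s (Finset.subset_univ I)
  -- valuation of product over a set
  have hval : ∀ (I : Finset (Fin k)) (p : ℕ),
      (g I).factorization p = ∑ i ∈ I, (s i).factorization p := by
    intro I p
    rw [hg]
    rw [Nat.factorization_prod fun i _ => hsne i, Finsupp.finset_sum_apply]
  have hLval : ∀ p : ℕ, (S.lcm g).factorization p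
      = S.sup fun I => ∑ i ∈ I, (s i).factorization p := by
    intro p
    rw [factorization_finset_lcm S g hgne p]
    exact Finset.sup_congr rfl fun I _ => hval I p
  constructor
  · -- L_t = product → d ≤ t
    intro hL
    rw [hd]
    apply Finset.sup_le
    intro I hI
    simp only [Finset.mem_filter] at hI
    obtain ⟨-, hgcd⟩ := hI
    obtain ⟨p, hp, hpd⟩ := Nat.exists_prime_and_dvd (by omega : I.gcd s ≠ 1)
    by_contra hcon
    push_neg at hcon
    -- every i in I has p ∣ s i
    have hpdvd : ∀ i ∈ I, 0 < (s i).factorization p := fun i hi =>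
      hp.factorization_pos_of_dvd (hsne i) (hpd.trans (Finset.gcd_dvd hi))
    have hIne : I.Nonempty := by
      rcases I.eq_empty_or_nonempty with h | h
      · rw [h] at hgcd; simp [Finset.gcd_empty] at hgcd
      · exact h
    -- the product's valuation at p
    have hge : (∏ i, s i).factorization p ≤ (S.lcm g).factorization p := by
      rw [hL]
    rw [hLval] at hge
    have hkey : ∀ J ∈ S, (∑ i ∈ J, (s i).factorization p)
        < (∏ i, s i).factorization p := by
      intro J hJ
      rw [hS, Finset.mem_powersetCard] at hJ
      obtain ⟨-, hJcard⟩ := hJ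
      -- there is i0 ∈ I \ J
      have : (I \ J).Nonempty := by
        rw [← Finset.card_pos]
        have := Finset.le_card_sdiff J I
        omega
      obtain ⟨i0, hi0⟩ := this
      rw [Finset.mem_sdiff] at hi0
      have hprodval : (∏ i, s i).factorization p = ∑ i : Fin k, (s i).factorization p := by
        rw [Nat.factorization_prod fun i _ => hsne i, Finsupp.finset_sum_apply]
      rw [hprodval]
      have hsub : J ⊆ univ.erase i0 := fun x hx =>
        Finset.mem_erase.mpr ⟨fun h => hi0.2 (h ▸ hx), Finset.mem_univ x⟩
      calc ∑ i ∈ J, (s i).factorization p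
          ≤ ∑ i ∈ univ.erase i0, (s i).factorization p :=
            Finset.sum_le_sum_of_subset hsub
        _ < (s i0).factorization p + ∑ i ∈ univ.erase i0, (s i).factorization p := by
            have := hpdvd i0 hi0.1; omega
        _ = ∑ i : Fin k, (s i).factorization p :=
            Finset.add_sum_erase _ (fun i => (s i).factorization p) (Finset.mem_univ i0)
    have hpos : 0 < (∏ i, s i).factorization p := by
      obtain ⟨i0, hi0⟩ := hIne
      have hprodval : (∏ i, s i).factorization p = ∑ i : Fin k, (s i).factorization p := by
        rw [Nat.factorization_prod fun i _ => hsne i, Finsupp.finset_sum_apply]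
      rw [hprodval]
      exact lt_of_lt_of_le (hpdvd i0 hi0) (Finset.single_le_sum
        (f := fun i => (s i).factorization p) (fun i _ => Nat.zero_le _) (Finset.mem_univ i0))
    have hsup := (Finset.sup_lt_iff (by simpa using hpos)).mpr hkey
    omega
  · -- d ≤ t → L_t = product
    intro hdt
    apply Nat.dvd_antisymm hLdvd
    rw [← Nat.factorization_le_iff_dvd hPne hLne, Finsupp.le_def]
    intro p
    rw [hLval]
    by_cases hp : p.Prime
    swap
    · simp [Nat.factorization_eq_zero_of_not_prime _ hp]
    -- the support of p among indices
    set T := univ.filter (fun i => p ∣ s i) with hT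
    have hTcard : T.card ≤ t := by
      rcases T.eq_empty_or_nonempty with h | hTne
      · rw [h]; simpa using h1
      · have hgcdT : 1 < T.gcd s := by
          have hpd : p ∣ T.gcd s := Finset.dvd_gcd fun i hi => by
            rw [hT, Finset.mem_filter] at hi; exact hi.2
          have hp2 : 2 ≤ p := hp.two_le
          have hgpos : 0 < T.gcd s := Nat.pos_of_ne_zero fun h0 => by
            obtain ⟨i0, hi0⟩ := hTne
            exact hsne i0 (Finset.gcd_eq_zero_iff.mp h0 i0 hi0)
          have := Nat.le_of_dvd hgpos hpd
          omega
        have : T ∈ (Finset.univ : Finset (Fin k)).powerset.filter (fun I => 1 < I.gcd s) := by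
          rw [Finset.mem_filter, Finset.mem_powerset]
          exact ⟨Finset.subset_univ T, hgcdT⟩
        calc T.card ≤ _ := Finset.le_sup this
          _ = d := hd.symm
          _ ≤ t := hdt
    obtain ⟨J, hTJ, hJcard⟩ := Finset.exists_superset_card_eq hTcard (by simpa using h2)
    have hJS : J ∈ S := by
      rw [hS, Finset.mem_powersetCard]
      exact ⟨Finset.subset_univ J, hJcard⟩
    have hprodval : (∏ i, s i).factorization p = ∑ i : Fin k, (s i).factorization p := by
      rw [Nat.factorization_prod fun i _ => hsne i, Finsupp.finset_sum_apply]
    rw [hprodval]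
    refine le_trans ?_ (Finset.le_sup hJS)
    -- total sum equals sum over J since outside T valuation is 0
    apply le_of_eq
    symm
    apply Finset.sum_subset (Finset.subset_univ J)
    intro i _ hiJ
    have hiT : i ∉ T := fun h => hiJ (hTJ h)
    rw [hT, Finset.mem_filter] at hiT
    push_neg at hiT
    have hnd : ¬ p ∣ s i := hiT (Finset.mem_univ i)
    exact Nat.factorization_eq_zero_of_not_dvd hnd
end
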